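/- A symmetric real polynomial p(x, y) in two variables defines an associative binary operation on ℝ if and only if p is of one of the forms: p(x, y) = α (constant), p(x, y) = α + x + y, or p(x, y) = β(β−1)/γ + β(x + y) + γxy with γ ≠ 0, for some real constants α, β, γ. -/

import Mathlib

/-- Any two-variable polynomial can be viewed as a polynomial in `x` with
coefficients polynomials in `y`. -/
lemma repr2_aux (p : MvPolynomial (Fin 2) ℝ) : ∃ Q : Polynomial (Polynomial ℝ),
    ∀ x y : ℝ, MvPolynomial.eval ![x, y] p = ((Q.map (Polynomial.evalRingHom y)).eval x) := by
  refine ⟨MvPolynomial.eval₂ (Polynomial.C.comp Polynomial.C)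
    ![Polynomial.X, Polynomial.C Polynomial.X] p, ?_⟩
  intro x y
  induction p using MvPolynomial.induction_on with
  | C a => simp
  | add p q hp hq => simp [hp, hq]
  | mul_X q i hq =>
      fin_cases i <;> simp [hq]

/-- A symmetric associative polynomial function of two variables is affine in
each variable. -/
lemma linear_form_aux (f : ℝ → ℝ → ℝ) (hsymm : ∀ x y, f x y = f y x)
    (hassoc : ∀ x y z, f (f x y) z = f x (f y z))
    (Q : Polynomial (Polynomial ℝ))
    (hQ : ∀ x y : ℝ, f x y = ((Q.map (Polynomial.evalRingHom y)).eval x)) :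
    ∃ α β γ : ℝ, ∀ x y, f x y = α + β * (x + y) + γ * (x * y) := by
  by_cases h0 : Q = 0
  · exact ⟨0, 0, 0, fun x y => by simp [hQ, h0]⟩
  -- find y₀ where leading coefficient doesn't vanish
  have hlc : Q.leadingCoeff ≠ 0 := Polynomial.leadingCoeff_ne_zero.2 h0
  have hy0 : ∃ y0 : ℝ, Q.leadingCoeff.eval y0 ≠ 0 := by
    by_contra h
    push_neg at h
    exact hlc (Polynomial.funext (fun r => by simp [h r]))
  obtain ⟨y0, hy0⟩ := hy0
  set d := Q.natDegree with hd
  have hdeg : (Q.map (Polynomial.evalRingHom y0)).natDegree = d :=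
    Polynomial.natDegree_map_of_leadingCoeff_ne_zero _ hy0
  -- associativity as polynomial identity at y = z = y₀
  have hcomp : ((Q.map (Polynomial.evalRingHom y0)).comp (Q.map (Polynomial.evalRingHom y0)))
      = Q.map (Polynomial.evalRingHom (f y0 y0)) := by
    apply Polynomial.funext
    intro x
    rw [Polynomial.eval_comp, ← hQ, ← hQ, ← hQ, hassoc]
  have hdd : d * d ≤ d := by
    calc d * d = ((Q.map (Polynomial.evalRingHom y0)).comp
        (Q.map (Polynomial.evalRingHom y0))).natDegree := by
          rw [Polynomial.natDegree_comp, hdeg]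
    _ = (Q.map (Polynomial.evalRingHom (f y0 y0))).natDegree := by rw [hcomp]
    _ ≤ d := Polynomial.natDegree_map_le
  have hd1 : d ≤ 1 := by nlinarith
  -- thus each slice is affine
  have haff : ∀ x y : ℝ, f x y =
      (Q.map (Polynomial.evalRingHom y)).coeff 1 * x
        + (Q.map (Polynomial.evalRingHom y)).coeff 0 := by
    intro x y
    have h1 : (Q.map (Polynomial.evalRingHom y)).natDegree ≤ 1 :=
      le_trans Polynomial.natDegree_map_le hd1
    rw [hQ]
    conv_lhs => rw [Polynomial.eq_X_add_C_of_natDegree_le_one h1]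
    simp [mul_comm x]
  set A : ℝ → ℝ := fun y => (Q.map (Polynomial.evalRingHom y)).coeff 1 with hA
  set B : ℝ → ℝ := fun y => (Q.map (Polynomial.evalRingHom y)).coeff 0 with hB
  have haff' : ∀ x y, f x y = A y * x + B y := haff
  -- use symmetry to pin down A and B
  have hsym' : ∀ x y, A y * x + B y = A x * y + B x := by
    intro x y; rw [← haff', ← haff', hsymm]
  have hBy : ∀ y, B y = A 0 * y + B 0 := by
    intro y; have := hsym' 0 y; simpa using this
  have hAy : ∀ x, A x = (A 1 - A 0) * x + A 0 := by
    intro x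
    have h1 := hsym' x 1
    have h2 := hBy x
    have h3 := hBy 1
    nlinarith [h1, h2, h3]
  refine ⟨B 0, A 0, A 1 - A 0, fun x y => ?_⟩
  rw [haff' x y, hAy y, hBy y]; ring

/-- Evaluation of a two-variable real polynomial at `(x, y)`. -/
noncomputable def ev2 (p : MvPolynomial (Fin 2) ℝ) (x y : ℝ) : ℝ :=
  MvPolynomial.eval ![x, y] p

theorem stmt_9 (p : MvPolynomial (Fin 2) ℝ)
    (hsymm : ∀ x y : ℝ, ev2 p x y = ev2 p y x) :
    (∀ x y z : ℝ, ev2 p (ev2 p x y) z = ev2 p x (ev2 p y z)) ↔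
      ((∃ α : ℝ, ∀ x y : ℝ, ev2 p x y = α) ∨
       (∃ α : ℝ, ∀ x y : ℝ, ev2 p x y = α + x + y) ∨
       (∃ β γ : ℝ, γ ≠ 0 ∧ ∀ x y : ℝ,
          ev2 p x y = β * (β - 1) / γ + β * (x + y) + γ * (x * y))) := by
  constructor
  · intro hassoc
    obtain ⟨Q, hQ⟩ := repr2_aux p
    obtain ⟨α, β, γ, hform⟩ := linear_form_aux (ev2 p) hsymm hassoc Q hQ
    -- associativity at (1,0,0) gives β² = β + αγ
    have key : β * β = β + α * γ := by
      have h := hassoc 1 0 0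
      rw [hform, hform, hform, hform] at h
      nlinarith [h]
    by_cases hγ : γ = 0
    · subst hγ
      have hβ : β = 0 ∨ β = 1 := by
        have : β * (β - 1) = 0 := by nlinarith
        rcases mul_eq_zero.mp this with h | h
        · left; exact h
        · right; linarith
      rcases hβ with h | h
      · left; exact ⟨α, fun x y => by rw [hform]; rw [h]; ring⟩
      · right; left; exact ⟨α, fun x y => by rw [hform, h]; ring⟩
    · right; right
      refine ⟨β, γ, hγ, fun x y => ?_⟩
      rw [hform]
      have : α = β * (β - 1) / γ := by field_simp; nlinarith [key]
      rw [this]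
  · rintro (⟨α, h⟩ | ⟨α, h⟩ | ⟨β, γ, hγ, h⟩) x y z
    · rw [h, h]
    · rw [h, h, h, h]; ring
    · rw [h, h, h, h]; field_simp; ring
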